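/- A Magari algebra is □-founded if and only if it is embeddable into the powerset Magari algebra of some scattered topological space (with □ interpreted as the co-derived-set operator cd_τ). -/

import Mathlib

universe u

def Scattered (X : Type*) (t : TopologicalSpace X) : Prop :=
  ∀ S : Set X, S.Nonempty → ∃ x ∈ S, ∃ U : Set X, t.IsOpen U ∧ U ∩ S = {x}

def cd {X : Type*} (t : TopologicalSpace X) (V : Set X) : Set X :=
  {x | ∃ U : Set X, t.IsOpen U ∧ x ∈ U ∧ U \ {x} ⊆ V}

namespace BoxFounded

variable {A : Type u} [BooleanAlgebra A]

/-- Ultrafilters on a Boolean algebra, hand-rolled. -/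
structure UF (A : Type u) [BooleanAlgebra A] : Type u where
  s : Set A
  top_mem : ⊤ ∈ s
  bot_nmem : ⊥ ∉ s
  mem_of_le : ∀ {a b : A}, a ∈ s → a ≤ b → b ∈ s
  inf_mem : ∀ {a b : A}, a ∈ s → b ∈ s → a ⊓ b ∈ s
  compl_mem : ∀ {a : A}, a ∉ s → aᶜ ∈ s

namespace UF

theorem not_mem_of_compl_mem (u : UF A) {a : A} (h : aᶜ ∈ u.s) : a ∉ u.s := fun ha =>
  u.bot_nmem (by simpa using u.inf_mem ha h)

theorem compl_mem_iff (u : UF A) {a : A} : aᶜ ∈ u.s ↔ a ∉ u.s :=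
  ⟨u.not_mem_of_compl_mem, u.compl_mem⟩

theorem mem_or_of_sup_mem (u : UF A) {a b : A} (h : a ⊔ b ∈ u.s) : a ∈ u.s ∨ b ∈ u.s := by
  by_contra hc
  push_neg at hc
  have hab : aᶜ ⊓ bᶜ ∈ u.s := u.inf_mem (u.compl_mem hc.1) (u.compl_mem hc.2)
  rw [← compl_sup] at hab
  exact u.not_mem_of_compl_mem hab h

end UF

/-- Every (proper) filter extends to an ultrafilter. -/
theorem exists_uf_supset {F : Set A} (htop : ⊤ ∈ F) (hbot : ⊥ ∉ F)
    (hup : ∀ {a b : A}, a ∈ F → a ≤ b → b ∈ F)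
    (hinf : ∀ {a b : A}, a ∈ F → b ∈ F → a ⊓ b ∈ F) :
    ∃ u : UF A, F ⊆ u.s := by
  classical
  set S : Set (Set A) := {G | ⊤ ∈ G ∧ ⊥ ∉ G ∧ (∀ {a b : A}, a ∈ G → a ≤ b → b ∈ G) ∧
      (∀ {a b : A}, a ∈ G → b ∈ G → a ⊓ b ∈ G)} with hS
  have hFS : F ∈ S := ⟨htop, hbot, fun h hle => hup h hle, fun h h' => hinf h h'⟩
  obtain ⟨m, hFm, hmS, hmax⟩ : ∃ m, F ⊆ m ∧ m ∈ S ∧ ∀ G ∈ S, m ⊆ G → G ⊆ m := by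
    obtain ⟨m, hFm, hm⟩ := zorn_subset_nonempty S (fun c hcS hchain hcne => by
      refine ⟨⋃₀ c, ⟨?_, ?_, ?_, ?_⟩, fun s hs => Set.subset_sUnion_of_mem hs⟩
      · obtain ⟨G, hG⟩ := hcne
        exact ⟨G, hG, (hcS hG).1⟩
      · rintro ⟨G, hG, hbG⟩
        exact (hcS hG).2.1 hbG
      · rintro a b ⟨G, hG, haG⟩ hle
        exact ⟨G, hG, (hcS hG).2.2.1 haG hle⟩
      · rintro a b ⟨G, hG, haG⟩ ⟨G', hG', hbG'⟩
        rcases hchain.total hG hG' with h | h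
        · exact ⟨G', hG', (hcS hG').2.2.2 (h haG) hbG'⟩
        · exact ⟨G, hG, (hcS hG).2.2.2 haG (h hbG')⟩) F hFS
    exact ⟨m, hFm, hm.1, fun G hG hmG => hm.2 hG hmG⟩
  obtain ⟨hmtop, hmbot, hmup, hminf⟩ := hmS
  refine ⟨⟨m, hmtop, hmbot, fun h hle => hmup h hle, fun h h' => hminf h h', ?_⟩, hFm⟩
  intro a ha
  set G : Set A := {e | ∃ g ∈ m, g ⊓ aᶜ ≤ e} with hG
  have hGS : G ∈ S := by
    refine ⟨⟨⊤, hmtop, le_top⟩, ?_, ?_, ?_⟩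
    · rintro ⟨g, hg, hle⟩
      have : g ≤ a := by
        rw [← sdiff_eq_bot_iff, sdiff_eq]
        exact le_bot_iff.mp hle
      exact ha (hmup hg this)
    · rintro x y ⟨g, hg, hle⟩ hxy
      exact ⟨g, hg, hle.trans hxy⟩
    · rintro x y ⟨g, hg, hle⟩ ⟨g', hg', hle'⟩
      exact ⟨g ⊓ g', hminf hg hg', by
        calc g ⊓ g' ⊓ aᶜ ≤ (g ⊓ aᶜ) ⊓ (g' ⊓ aᶜ) := by
              simp only [le_inf_iff]
              constructor
              · exact ⟨inf_le_left.trans inf_le_left, inf_le_right⟩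
              · exact ⟨inf_le_left.trans inf_le_right, inf_le_right⟩
          _ ≤ x ⊓ y := inf_le_inf hle hle'⟩
  have hmG : m ⊆ G := fun g hg => ⟨g, hg, inf_le_left⟩
  exact hmax G hGS hmG ⟨⊤, hmtop, by simpa using inf_le_right⟩

theorem exists_uf_mem {e : A} (he : e ≠ ⊥) : ∃ u : UF A, e ∈ u.s := by
  obtain ⟨u, hu⟩ := exists_uf_supset (F := {x | e ≤ x}) le_top
    (fun h => he (le_bot_iff.mp h)) (fun h hle => h.trans hle) (fun h h' => le_inf h h')
  exact ⟨u, hu le_rfl⟩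


section GLlem
variable (box : A → A)

def dia (a : A) : A := (box aᶜ)ᶜ

variable (hmeet : ∀ x y : A, box (x ⊓ y) = box x ⊓ box y)

theorem box_mono (hmeet : ∀ x y : A, box (x ⊓ y) = box x ⊓ box y) {a b : A} (h : a ≤ b) :
    box a ≤ box b := by
  have : box (a ⊓ b) = box a ⊓ box b := hmeet a b
  rw [inf_eq_left.mpr h] at this
  rw [this]
  exact inf_le_right

theorem box_le_box_box (hmeet : ∀ x y : A, box (x ⊓ y) = box x ⊓ box y)
    (hloeb : ∀ x : A, box (box x ⇨ x) = box x) (a : A) : box a ≤ box (box a) := by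
  set q := a ⊓ box a with hq
  have h1 : a ≤ box q ⇨ q := by
    rw [le_himp_iff]
    have : box q ≤ box a := box_mono box hmeet inf_le_left
    calc a ⊓ box q ≤ a ⊓ box a := inf_le_inf_left a this
      _ = q := rfl
  have h2 : box a ≤ box (box q ⇨ q) := box_mono box hmeet h1
  rw [hloeb q] at h2
  calc box a ≤ box q := h2
    _ = box a ⊓ box (box a) := hmeet a (box a)
    _ ≤ box (box a) := inf_le_right

/-- The key algebraic inequality: `□b ⊓ □(¬(b ⊓ □b ⊓ ¬a)) ≤ □a`. -/
theorem key_ineq (hmeet : ∀ x y : A, box (x ⊓ y) = box x ⊓ box y)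
    (hloeb : ∀ x : A, box (box x ⇨ x) = box x) (b a : A) :
    box b ⊓ box (b ⊓ box b ⊓ aᶜ)ᶜ ≤ box a := by
  have h1 : box b ≤ box (b ⊓ box b) := by
    rw [hmeet]
    exact le_inf le_rfl (box_le_box_box box hmeet hloeb b)
  have h2 : box b ⊓ box (b ⊓ box b ⊓ aᶜ)ᶜ ≤ box (b ⊓ box b ⊓ (b ⊓ box b ⊓ aᶜ)ᶜ) := by
    rw [hmeet]
    exact inf_le_inf_right _ h1
  refine h2.trans (box_mono box hmeet ?_)
  have : b ⊓ box b ⊓ (b ⊓ box b ⊓ aᶜ)ᶜ ≤ a := by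
    rw [compl_inf]
    rw [inf_sup_left]
    apply sup_le
    · rw [inf_compl_eq_bot]; exact bot_le
    · rw [compl_compl]; exact inf_le_right
  exact this

end GLlem

section VDef
variable (box : A → A)

/-- The transfinite hierarchy of "good" ultrafilters. -/
noncomputable def V : Ordinal.{u} → Set (UF A) :=
  WellFounded.fix Ordinal.lt_wf (fun α rec =>
    {u : UF A | ∀ b a : A, box b ∈ u.s →
      (∀ β (hβ : β < α), ∀ v : UF A, v ∈ rec β hβ → b ⊓ box b ⊓ aᶜ ∉ v.s) → box a ∈ u.s})

theorem V_eq (α : Ordinal.{u}) : V box α =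
    {u : UF A | ∀ b a : A, box b ∈ u.s →
      (∀ β, β < α → ∀ v : UF A, v ∈ V box β → b ⊓ box b ⊓ aᶜ ∉ v.s) → box a ∈ u.s} :=
  WellFounded.fix_eq _ _ _

theorem V_mono {α α' : Ordinal.{u}} (h : α ≤ α') : V (A := A) box α ⊆ V box α' := by
  intro u hu
  rw [V_eq] at hu ⊢
  intro b a hb hI
  exact hu b a hb (fun β hβ v hv => hI β (lt_of_lt_of_le hβ h) v hv)

/-- Elements not realized in any level of the hierarchy. -/
def Ibar : Set A := {d | ∀ (α : Ordinal.{u}) (v : UF A), v ∈ V box α → d ∉ v.s}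

theorem bot_mem_Ibar : (⊥ : A) ∈ Ibar box := fun _ v _ => v.bot_nmem

theorem sup_mem_Ibar {d d' : A} (h : d ∈ Ibar box) (h' : d' ∈ Ibar box) :
    d ⊔ d' ∈ Ibar box := by
  intro α v hv hmem
  rcases v.mem_or_of_sup_mem hmem with hh | hh
  · exact h α v hv hh
  · exact h' α v hv hh

end VDef

theorem compl_finsetInf {ι : Type*} (g : ι → A) (t : Finset ι) :
    (t.inf fun v => (g v)ᶜ)ᶜ = t.sup g := by
  classical
  induction t using Finset.induction_on with
  | empty => simp
  | insert _ _ hnotmem ih => simp [compl_inf, ih]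

theorem dia_finsetSup {ι : Type*} (box : A → A) (htop : box ⊤ = ⊤)
    (hmeet : ∀ x y : A, box (x ⊓ y) = box x ⊓ box y) (g : ι → A) (t : Finset ι) :
    (t.sup fun v => dia box (g v)) = dia box (t.sup g) := by
  classical
  induction t using Finset.induction_on with
  | empty => simp [dia, htop]
  | insert _ _ hnotmem ih =>
      rw [Finset.sup_insert, Finset.sup_insert, ih]
      simp only [dia, compl_sup, hmeet, compl_inf]


section Chain
variable (box : A → A)

/-- Step lemma: every nonzero element of `Ibar` diamond-steps to another element of `Ibar`. -/
theorem Ibar_step (htop : box ⊤ = ⊤) (hmeet : ∀ x y : A, box (x ⊓ y) = box x ⊓ box y)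
    (hloeb : ∀ x : A, box (box x ⇨ x) = box x)
    {d : A} (hd : d ∈ Ibar box) :
    ∃ d', d' ∈ Ibar box ∧ d ≤ dia box d' := by
  classical
  -- for every ultrafilter containing d, find a witness
  have H : ∀ v : UF A, d ∈ v.s → ∃ c', c' ∈ Ibar box ∧ dia box c' ∈ v.s := by
    intro v hv
    have hsub : ∃ b a : A, box b ∈ v.s ∧ box a ∉ v.s ∧ (b ⊓ box b ⊓ aᶜ) ∈ Ibar box := by
      by_contra hno
      push_neg at hno
      -- levels witnessing failure of Ibar-membership
      have hlev : ∀ p : A × A, ∃ α : Ordinal.{u},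
          (box p.1 ∈ v.s → box p.2 ∉ v.s → ∃ w : UF A, w ∈ V box α ∧ (p.1 ⊓ box p.1 ⊓ p.2ᶜ) ∈ w.s) := by
        intro p
        by_cases h1 : box p.1 ∈ v.s
        · by_cases h2 : box p.2 ∉ v.s
          · have := hno p.1 p.2 h1 h2
            simp only [Ibar, Set.mem_setOf_eq, not_forall] at this
            obtain ⟨α, w, hw, hmem⟩ := this
            exact ⟨α, fun _ _ => ⟨w, hw, not_not.mp hmem⟩⟩
          · exact ⟨0, fun _ hh => absurd hh (fun x => h2 x)⟩
        · exact ⟨0, fun hh => absurd hh h1⟩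
      choose lev hlev using hlev
      set αstar : Ordinal.{u} := (iSup lev) + 1 with hαstar
      have hvV : v ∉ V box αstar := fun hVv => hd αstar v hVv hv
      rw [V_eq] at hvV
      simp only [Set.mem_setOf_eq, not_forall] at hvV
      obtain ⟨b, a, hb, hI, hba⟩ := hvV
      obtain ⟨w, hwV, hwmem⟩ := hlev (b, a) hb hba
      have hlt : lev (b, a) < αstar := by
        have h1 : lev (b, a) ≤ iSup lev := le_ciSup (Ordinal.bddAbove_range lev) (b, a)
        calc lev (b, a) ≤ iSup lev := h1
          _ < iSup lev + 1 := by
            rw [Ordinal.add_one_eq_succ]; exact Order.lt_succ _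
      exact hI (lev (b, a)) hlt w hwV hwmem
    obtain ⟨b, a, hb, ha, hIbar⟩ := hsub
    refine ⟨b ⊓ box b ⊓ aᶜ, hIbar, ?_⟩
    -- dia c' ∈ v since box b ⊓ box (c'ᶜ) ≤ box a
    rw [dia, v.compl_mem_iff]
    intro hboxc
    exact ha (v.mem_of_le (v.inf_mem hb hboxc) (key_ineq box hmeet hloeb b a))
  choose cw hcw using H
  -- the filter generated by d and complements of the diamonds
  set F : Set A := {x | ∃ t : Finset {v : UF A // d ∈ v.s},
      d ⊓ t.inf (fun v => (dia box (cw v.1 v.2))ᶜ) ≤ x} with hF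
  by_cases hbotF : ⊥ ∈ F
  · -- extract the finite subcover
    obtain ⟨t, ht⟩ := hbotF
    have hd' : d ≤ dia box (t.sup fun v => cw v.1 v.2) := by
      have h1 : d ≤ (t.inf (fun v => (dia box (cw v.1 v.2))ᶜ))ᶜ := by
        rw [le_compl_iff_disjoint_right]
        exact disjoint_iff.mpr (le_bot_iff.mp ht)
      rw [compl_finsetInf (fun v => dia box (cw v.1 v.2)) t,
        dia_finsetSup box htop hmeet (fun v => cw v.1 v.2) t] at h1
      exact h1
    refine ⟨t.sup fun v => cw v.1 v.2, ?_, hd'⟩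
    -- Finset.sup of Ibar elements is in Ibar
    have hIb : ∀ t : Finset {v : UF A // d ∈ v.s}, (t.sup fun v => cw v.1 v.2) ∈ Ibar box := by
      intro t
      induction t using Finset.induction_on with
      | empty => simpa using bot_mem_Ibar box
      | insert _ _ hnotmem ih =>
          rw [Finset.sup_insert]
          exact sup_mem_Ibar box (hcw _ _).1 ih
    exact hIb t
  · -- otherwise extend F to an ultrafilter, contradiction
    exfalso
    have hFfilter : ∃ u : UF A, F ⊆ u.s := by
      apply exists_uf_supset (F := F)
      · exact ⟨∅, by simp⟩
      · exact hbotF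
      · rintro x y ⟨t, ht⟩ hxy
        exact ⟨t, ht.trans hxy⟩
      · rintro x y ⟨t, ht⟩ ⟨t', ht'⟩
        refine ⟨t ∪ t', ?_⟩
        have h1 : (t ∪ t').inf (fun v => (dia box (cw v.1 v.2))ᶜ) ≤
            t.inf (fun v => (dia box (cw v.1 v.2))ᶜ) := Finset.inf_mono Finset.subset_union_left
        have h2 : (t ∪ t').inf (fun v => (dia box (cw v.1 v.2))ᶜ) ≤
            t'.inf (fun v => (dia box (cw v.1 v.2))ᶜ) := Finset.inf_mono Finset.subset_union_right
        calc d ⊓ (t ∪ t').inf (fun v => (dia box (cw v.1 v.2))ᶜ)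
            ≤ (d ⊓ t.inf (fun v => (dia box (cw v.1 v.2))ᶜ)) ⊓
              (d ⊓ t'.inf (fun v => (dia box (cw v.1 v.2))ᶜ)) := by
              exact le_inf (inf_le_inf_left d h1) (inf_le_inf_left d h2)
          _ ≤ x ⊓ y := inf_le_inf ht ht'
    obtain ⟨u, hu⟩ := hFfilter
    have hdu : d ∈ u.s := hu ⟨∅, by simpa using inf_le_left⟩
    have h1 : (dia box (cw u hdu))ᶜ ∈ u.s := hu ⟨{⟨u, hdu⟩}, by simpa using inf_le_right⟩
    exact u.not_mem_of_compl_mem h1 (hcw u hdu).2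

/-- Under □-foundedness, `Ibar` contains only `⊥`. -/
theorem Ibar_eq_bot (htop : box ⊤ = ⊤) (hmeet : ∀ x y : A, box (x ⊓ y) = box x ⊓ box y)
    (hloeb : ∀ x : A, box (box x ⇨ x) = box x)
    (hFound : ∀ a : ℕ → A, (∀ i : ℕ, box (a (i + 1)) ≤ a i) → a 0 = ⊤)
    {d : A} (hd : d ∈ Ibar box) : d = ⊥ := by
  classical
  by_contra hbot
  -- build an infinite diamond-chain
  have step : ∀ p : {d : A // d ∈ Ibar box ∧ d ≠ ⊥}, ∃ q : {d : A // d ∈ Ibar box ∧ d ≠ ⊥},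
      p.1 ≤ dia box q.1 := by
    rintro ⟨d, hd, hdbot⟩
    obtain ⟨d', hd', hle⟩ := Ibar_step box htop hmeet hloeb hd
    have hd'bot : d' ≠ ⊥ := by
      rintro rfl
      have hdb : d ≤ ⊥ := by simpa [dia, htop] using hle
      exact hdbot (le_bot_iff.mp hdb)
    exact ⟨⟨d', hd', hd'bot⟩, hle⟩
  choose next hnext using step
  set seq : ℕ → {d : A // d ∈ Ibar box ∧ d ≠ ⊥} := fun n => next^[n] ⟨d, hd, hbot⟩ with hseq
  have hstep : ∀ i, (seq i).1 ≤ dia box (seq (i + 1)).1 := by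
    intro i
    have : seq (i + 1) = next (seq i) := by
      simp only [hseq, Function.iterate_succ_apply']
    rw [this]
    exact hnext (seq i)
  have hcontr := hFound (fun i => ((seq i).1)ᶜ) (fun i => by
    have h := hstep i
    rw [dia] at h
    exact le_compl_comm.mp h)
  have hz : (seq 0).1 = ⊥ := by
    have h0 : ((seq 0).1)ᶜ = ⊤ := hcontr
    simpa using congrArg compl h0
  exact (seq 0).2.2 hz

end Chain

section Space
variable (box : A → A) (Λ : Ordinal.{u})

/-- Points of the representation space: ultrafilters together with a legal rank. -/
def Pt : Type u :=
  {p : UF A × Λ.ToType // p.1 ∈ V box (((Ordinal.ToType.mk (o := Λ)).symm p.2 : Set.Iio Λ) : Ordinal.{u})}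

variable {box Λ} in
noncomputable def rk (x : Pt box Λ) : Ordinal.{u} :=
  (((Ordinal.ToType.mk (o := Λ)).symm x.1.2 : Set.Iio Λ) : Ordinal.{u})

variable {box Λ} in
def puf (x : Pt box Λ) : UF A := x.1.1

def fs (a : A) : Set (Pt box Λ) := {x | a ∈ (puf x).s}

variable {box Λ} in
def nb (x : Pt box Λ) (c : A) : Set (Pt box Λ) :=
  insert x {y | rk y < rk x ∧ c ⊓ box c ∈ (puf y).s}

theorem rk_lt (x : Pt box Λ) : rk x < Λ := ((Ordinal.ToType.mk (o := Λ)).symm x.1.2).2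

def topo (htop : box ⊤ = ⊤) (hmeet : ∀ x y : A, box (x ⊓ y) = box x ⊓ box y) :
    TopologicalSpace (Pt box Λ) where
  IsOpen U := ∀ x ∈ U, ∃ c : A, box c ∈ (puf x).s ∧ nb x c ⊆ U
  isOpen_univ := fun x _ => ⟨⊤, by rw [htop]; exact (puf x).top_mem, Set.subset_univ _⟩
  isOpen_inter := by
    intro U W hU hW x hx
    obtain ⟨c, hc, hcsub⟩ := hU x hx.1
    obtain ⟨c', hc', hc'sub⟩ := hW x hx.2
    refine ⟨c ⊓ c', by rw [hmeet]; exact (puf x).inf_mem hc hc', ?_⟩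
    have key : nb x (c ⊓ c') ⊆ nb x c ∩ nb x c' := by
      rintro y (rfl | ⟨hlt, hmem⟩)
      · exact ⟨Set.mem_insert _ _, Set.mem_insert _ _⟩
      · rw [hmeet] at hmem
        constructor
        · refine Set.mem_insert_iff.mpr (Or.inr ⟨hlt, (puf y).mem_of_le hmem ?_⟩)
          exact le_inf (inf_le_left.trans inf_le_left) (inf_le_right.trans inf_le_left)
        · refine Set.mem_insert_iff.mpr (Or.inr ⟨hlt, (puf y).mem_of_le hmem ?_⟩)
          exact le_inf (inf_le_left.trans inf_le_right) (inf_le_right.trans inf_le_right)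
    exact key.trans (Set.inter_subset_inter hcsub hc'sub)
  isOpen_sUnion := by
    intro s hs x hx
    obtain ⟨U, hUs, hxU⟩ := hx
    obtain ⟨c, hc, hsub⟩ := hs U hUs x hxU
    exact ⟨c, hc, hsub.trans (Set.subset_sUnion_of_mem hUs)⟩

variable {box Λ}
variable (htop : box ⊤ = ⊤) (hmeet : ∀ x y : A, box (x ⊓ y) = box x ⊓ box y)

theorem nb_open (x : Pt box Λ) {c : A} (hc : box c ∈ (puf x).s) :
    (topo box Λ htop hmeet).IsOpen (nb x c) := by
  rintro z (rfl | ⟨hlt, hmem⟩)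
  · exact ⟨c, hc, subset_rfl⟩
  · refine ⟨c, (puf z).mem_of_le hmem inf_le_right, ?_⟩
    rintro w (rfl | ⟨hlt', hmem'⟩)
    · exact Set.mem_insert_iff.mpr (Or.inr ⟨hlt, hmem⟩)
    · exact Set.mem_insert_iff.mpr (Or.inr ⟨hlt'.trans hlt, hmem'⟩)

theorem scattered_topo : Scattered (Pt box Λ) (topo box Λ htop hmeet) := by
  intro S hS
  have hne : (rk '' S).Nonempty := hS.image _
  obtain ⟨α₀, ⟨x, hxS, hxrk⟩, hmin⟩ := Ordinal.lt_wf.has_min (rk '' S) hne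
  refine ⟨x, hxS, nb x ⊤, nb_open htop hmeet x (by rw [htop]; exact (puf x).top_mem), ?_⟩
  apply Set.eq_singleton_iff_unique_mem.mpr
  refine ⟨⟨Set.mem_insert _ _, hxS⟩, ?_⟩
  rintro y ⟨(rfl | ⟨hlt, _⟩), hyS⟩
  · rfl
  · exact absurd (hxrk ▸ hlt) (by simpa using hmin (rk y) ⟨y, hyS, rfl⟩)

theorem cd_fs_subset (a : A) :
    cd (topo box Λ htop hmeet) (fs box Λ a) ⊆ fs box Λ (box a) := by
  rintro x ⟨U, hU, hxU, hsub⟩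
  obtain ⟨c, hc, hnb⟩ := hU x hxU
  have hV := x.2
  rw [V_eq] at hV
  refine hV c a hc ?_
  intro β hβ v hv hmem
  have hβΛ : β < Λ := hβ.trans (rk_lt box Λ x)
  obtain ⟨w, hw⟩ : ∃ w : Λ.ToType,
      (((Ordinal.ToType.mk (o := Λ)).symm w : Set.Iio Λ) : Ordinal.{u}) = β :=
    ⟨Ordinal.ToType.mk (o := Λ) ⟨β, hβΛ⟩, by simp⟩
  have hvV : v ∈ V box (((Ordinal.ToType.mk (o := Λ)).symm w : Set.Iio Λ) : Ordinal.{u}) := by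
    rw [hw]; exact hv
  set y : Pt box Λ := ⟨(v, w), hvV⟩ with hy
  have hrky : rk y = β := hw
  have hynb : y ∈ nb x c := by
    refine Set.mem_insert_iff.mpr (Or.inr ⟨by rw [hrky]; exact hβ, ?_⟩)
    exact v.mem_of_le hmem inf_le_left
  have hyne : y ≠ x := by
    intro h
    rw [← h] at hβ
    exact absurd (hrky ▸ hβ) (lt_irrefl β)
  have hya : a ∈ v.s := hsub ⟨hnb hynb, hyne⟩
  have hyac : aᶜ ∈ v.s := v.mem_of_le hmem inf_le_right
  exact v.bot_nmem (by simpa using v.inf_mem hya hyac)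

theorem fs_box_subset_cd (a : A) :
    fs box Λ (box a) ⊆ cd (topo box Λ htop hmeet) (fs box Λ a) := by
  intro x hx
  refine ⟨nb x a, nb_open htop hmeet x hx, Set.mem_insert _ _, ?_⟩
  rintro y ⟨(rfl | ⟨hlt, hmem⟩), hne⟩
  · exact absurd rfl hne
  · exact (puf y).mem_of_le hmem inf_le_left


theorem fs_top : fs box Λ ⊤ = Set.univ :=
  Set.eq_univ_of_forall fun x => (puf x).top_mem

theorem fs_inf (a b : A) : fs box Λ (a ⊓ b) = fs box Λ a ∩ fs box Λ b := by
  ext x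
  exact ⟨fun h => ⟨(puf x).mem_of_le h inf_le_left, (puf x).mem_of_le h inf_le_right⟩,
    fun h => (puf x).inf_mem h.1 h.2⟩

theorem fs_compl (a : A) : fs box Λ aᶜ = (fs box Λ a)ᶜ := by
  ext x
  exact (puf x).compl_mem_iff

theorem fs_injective (hreal : ∀ e : A, e ≠ ⊥ → ∃ x : Pt box Λ, e ∈ (puf x).s) :
    Function.Injective (fs box Λ) := by
  intro a b hab
  by_contra hne
  have key : ∀ c d : A, fs box Λ c = fs box Λ d → c ≤ d := by
    intro c d hcd
    by_contra hle
    have hne' : c ⊓ dᶜ ≠ ⊥ := by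
      intro h
      exact hle (sdiff_eq_bot_iff.mp (by rw [sdiff_eq]; exact h))
    obtain ⟨x, hx⟩ := hreal _ hne'
    have hc : c ∈ (puf x).s := (puf x).mem_of_le hx inf_le_left
    have hdc : dᶜ ∈ (puf x).s := (puf x).mem_of_le hx inf_le_right
    have : x ∈ fs box Λ d := by rw [← hcd]; exact hc
    exact (puf x).not_mem_of_compl_mem hdc this
  exact hne (le_antisymm (key a b hab) (key b a hab.symm))

end Space
end BoxFounded

theorem box_founded_iff_embeddable {A : Type u} [BooleanAlgebra A] (box : A → A)
    (hbox_top : box ⊤ = ⊤)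
    (hbox_meet : ∀ x y : A, box (x ⊓ y) = box x ⊓ box y)
    (hbox_loeb : ∀ x : A, box (box x ⇨ x) = box x) :
    (∀ a : ℕ → A, (∀ i : ℕ, box (a (i + 1)) ≤ a i) → a 0 = ⊤) ↔
      ∃ (X : Type u) (t : TopologicalSpace X), Scattered X t ∧
        ∃ f : A → Set X, Function.Injective f ∧
          f ⊤ = Set.univ ∧
          (∀ a b : A, f (a ⊓ b) = f a ∩ f b) ∧
          (∀ a : A, f aᶜ = (f a)ᶜ) ∧
          (∀ a : A, f (box a) = cd t (f a)) := by
  classical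
  constructor
  · -- forward direction: build the space
    intro hFound
    -- the levels realize every nonzero element
    have hrealize : ∀ e : A, e ≠ ⊥ → ∃ α : Ordinal.{u}, ∃ u : BoxFounded.UF A, u ∈ BoxFounded.V box α ∧ e ∈ u.s := by
      intro e he
      by_contra hno
      push_neg at hno
      exact he (BoxFounded.Ibar_eq_bot box hbox_top hbox_meet hbox_loeb hFound
        (fun α v hv hmem => hno α v hv hmem))
    set g : A → Ordinal.{u} := fun e =>
      if h : ∃ α : Ordinal.{u}, ∃ u : BoxFounded.UF A, u ∈ BoxFounded.V box α ∧ e ∈ u.s then h.choose + 1 else 0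
      with hg
    set Λ : Ordinal.{u} := iSup g with hΛ
    have hrealΛ : ∀ e : A, e ≠ ⊥ → ∃ x : BoxFounded.Pt box Λ, e ∈ (BoxFounded.puf x).s := by
      intro e he
      have hex := hrealize e he
      obtain ⟨u, huV, hue⟩ := hex.choose_spec
      have hglt : hex.choose < Λ := by
        have h1 : g e = hex.choose + 1 := dif_pos hex
        have h2 : g e ≤ Λ := le_ciSup (Ordinal.bddAbove_range g) e
        have h3 : hex.choose < g e := by
          rw [h1, Ordinal.add_one_eq_succ]
          exact Order.lt_succ _
        exact h3.trans_le h2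
      refine ⟨⟨(u, Ordinal.ToType.mk (o := Λ) ⟨hex.choose, hglt⟩), ?_⟩, hue⟩
      simpa using huV
    refine ⟨BoxFounded.Pt box Λ, BoxFounded.topo box Λ hbox_top hbox_meet,
      BoxFounded.scattered_topo hbox_top hbox_meet, BoxFounded.fs box Λ, BoxFounded.fs_injective hrealΛ,
      BoxFounded.fs_top, BoxFounded.fs_inf, BoxFounded.fs_compl, ?_⟩
    intro a
    exact le_antisymm (BoxFounded.fs_box_subset_cd hbox_top hbox_meet a) (BoxFounded.cd_fs_subset hbox_top hbox_meet a)
  · -- backward direction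
    rintro ⟨X, t, hscat, f, hinj, htop, hinf, hcompl, hbox⟩ a ha
    by_contra hne
    have hmono : ∀ {c d : A}, c ≤ d → f c ⊆ f d := by
      intro c d hcd
      have : f (c ⊓ d) = f c ∩ f d := hinf c d
      rw [inf_eq_left.mpr hcd] at this
      rw [this]
      exact Set.inter_subset_right
    have hSne : (⋃ i, (f (a i))ᶜ : Set X).Nonempty := by
      have : f (a 0) ≠ Set.univ := by
        intro h
        exact hne (hinj (h.trans htop.symm))
      obtain ⟨x, hx⟩ := Set.ne_univ_iff_exists_notMem _ |>.mp this
      exact ⟨x, Set.mem_iUnion.mpr ⟨0, hx⟩⟩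
    obtain ⟨x, hxS, U, hU, hUS⟩ := hscat _ hSne
    obtain ⟨i, hxi⟩ := Set.mem_iUnion.mp hxS
    have hxU : x ∈ U := by
      have : x ∈ U ∩ ⋃ i, (f (a i))ᶜ := by rw [hUS]; rfl
      exact this.1
    have hxcd : x ∈ cd t (f (a (i + 1))) := by
      refine ⟨U, hU, hxU, ?_⟩
      rintro y ⟨hyU, hyne⟩
      by_contra hya
      have hyS : y ∈ ⋃ j, (f (a j))ᶜ := Set.mem_iUnion.mpr ⟨i + 1, hya⟩
      have : y ∈ ({x} : Set X) := by rw [← hUS]; exact ⟨hyU, hyS⟩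
      exact hyne this
    rw [← hbox] at hxcd
    exact hxi (hmono (ha i) hxcd)
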